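/- Adding a bidder to Find-Price-Block without changing the price bounds the new budget: if running Find-Price-Block on budgets B_1 ≥ ... ≥ B_n yields price p with block ending at ℓ*, and adding one more bidder with budget B still yields price p, then B ≤ B_{ℓ*}. -/
import Mathlib


open Finset

/-- Adding a bidder to Find-Price-Block without changing the price bounds the new
budget: running Find-Price-Block on sorted budgets `B` over `m` bidders and slots
`D 0 > D 1 > ... > 0` yields price `p = max_ℓ r_ℓ` with `lstar` the largest
maximizer; if inserting one more bidder with budget `B₀` (giving the sorted list
`ins` over `m+1` bidders) still yields price `p`, then `B₀ ≤ B lstar`. -/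
theorem stmt18 {m n : ℕ} (hmn : m < n) (B : Fin m → ℝ)
    (hB : Antitone B) (hBpos : ∀ i, 0 < B i)
    (D : ℕ → ℝ) (hD : ∀ i j, i < j → j < n → D j < D i) (hDpos : ∀ i, i < n → 0 < D i)
    (p : ℝ) (lstar : Fin m)
    (hp : IsGreatest
      {x : ℝ | ∃ ℓ : Fin m,
        x = (∑ i ∈ Finset.Iic ℓ, B i) / (∑ i ∈ Finset.range (ℓ.val + 1), D i)} p)
    (hlstar : (∑ i ∈ Finset.Iic lstar, B i) / (∑ i ∈ Finset.range (lstar.val + 1), D i) = p)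
    (B₀ : ℝ) (hB₀ : 0 < B₀)
    (ins : Fin (m + 1) → ℝ) (hins : Antitone ins)
    (hinsert : Multiset.map ins Finset.univ.val = B₀ ::ₘ Multiset.map B Finset.univ.val)
    (hsameprice : IsGreatest
      {x : ℝ | ∃ ℓ : Fin (m + 1),
        x = (∑ i ∈ Finset.Iic ℓ, ins i) / (∑ i ∈ Finset.range (ℓ.val + 1), D i)} p) :
    B₀ ≤ B lstar := by
  classical
  by_contra hcon
  push_neg at hcon
  -- Claim: the (j+2)-th largest of the inserted list is at most the (j+1)-th largest of B
  have claim2 : ∀ j : Fin m, ins j.succ ≤ B j := by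
    intro j
    by_contra hlt
    push_neg at hlt
    have hc := congrArg (Multiset.countP (fun x => B j < x)) hinsert
    rw [Multiset.countP_cons, Multiset.countP_map, Multiset.countP_map] at hc
    have hL : (Multiset.filter (fun a => B j < ins a) Finset.univ.val).card
        = (Finset.univ.filter (fun i => B j < ins i)).card := rfl
    have hR : (Multiset.filter (fun a => B j < B a) Finset.univ.val).card
        = (Finset.univ.filter (fun i => B j < B i)).card := rfl
    rw [hL, hR] at hc
    have h1 : (Iic j.succ : Finset (Fin (m+1))) ⊆ Finset.univ.filter (fun i => B j < ins i) := by
      intro i hi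
      rw [mem_Iic] at hi
      exact mem_filter.mpr ⟨mem_univ i, lt_of_lt_of_le hlt (hins hi)⟩
    have hcard1 : j.val + 2 ≤ (Finset.univ.filter (fun i => B j < ins i)).card := by
      have := Finset.card_le_card h1
      rwa [Fin.card_Iic, Fin.val_succ] at this
    have h2 : Finset.univ.filter (fun i => B j < B i) ⊆ Iio j := by
      intro i hi
      rw [mem_filter] at hi
      rw [mem_Iio]
      by_contra hij
      push_neg at hij
      exact absurd (hB hij) (not_le.mpr hi.2)
    have hcard2 : (Finset.univ.filter (fun i => B j < B i)).card ≤ j.val := by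
      have := Finset.card_le_card h2
      rwa [Fin.card_Iio] at this
    have hif : (if B j < B₀ then 1 else 0) ≤ 1 := by split <;> omega
    omega
  set L : Fin (m + 1) := lstar.castSucc with hL
  -- reindexing the tail sum
  have hmap : (Ici lstar).map (Fin.succEmb m) = Ioi L := by
    ext i
    simp only [mem_map, mem_Ici, mem_Ioi, Fin.lt_def, Fin.le_def, Fin.coe_castSucc,
      Fin.succEmb, Function.Embedding.coeFn_mk, Fin.val_succ, hL]
    constructor
    · rintro ⟨k, hk, rfl⟩; simp [Fin.val_succ]; omega
    · intro hi
      refine ⟨⟨i.val - 1, by omega⟩, ?_, Fin.ext ?_⟩ <;> simp <;> omega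
  have htail : ∑ i ∈ Ioi L, ins i = ∑ k ∈ Ici lstar, ins k.succ := by
    rw [← hmap, Finset.sum_map]; rfl
  have htail_le : ∑ i ∈ Ioi L, ins i ≤ ∑ k ∈ Ici lstar, B k := by
    rw [htail]
    exact Finset.sum_le_sum fun k _ => claim2 k
  -- total sums
  have htot : ∑ i, ins i = B₀ + ∑ i, B i := by
    have := congrArg Multiset.sum hinsert
    rwa [Multiset.sum_cons] at this
  -- splitting sums by complements
  have hcompl1 : (Iic L)ᶜ = Ioi L := by ext i; simp [not_le]
  have hsplit1 : ∑ i ∈ Iic L, ins i + ∑ i ∈ Ioi L, ins i = ∑ i, ins i := by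
    rw [← hcompl1]; exact Finset.sum_add_sum_compl (Iic L) ins
  have hcompl2 : (Iio lstar)ᶜ = Ici lstar := by ext i; simp [not_lt]
  have hsplit2 : ∑ i ∈ Iio lstar, B i + ∑ i ∈ Ici lstar, B i = ∑ i, B i := by
    rw [← hcompl2]; exact Finset.sum_add_sum_compl (Iio lstar) B
  -- the head sum of ins strictly exceeds the head sum of B
  have hIic : ∑ i ∈ Iic lstar, B i = B lstar + ∑ i ∈ Iio lstar, B i := by
    rw [← Finset.Iio_insert, Finset.sum_insert (by simp)]
  have hkey : ∑ i ∈ Iic lstar, B i < ∑ i ∈ Iic L, ins i := by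
    have h1 : B₀ + ∑ i ∈ Iio lstar, B i ≤ ∑ i ∈ Iic L, ins i := by linarith
    linarith
  -- denominator is positive
  have hd : 0 < ∑ i ∈ Finset.range (lstar.val + 1), D i := by
    apply Finset.sum_pos
    · intro i hi
      rw [Finset.mem_range] at hi
      exact hDpos i (by omega)
    · exact ⟨0, Finset.mem_range.mpr (Nat.succ_pos _)⟩
  -- the new ratio at L exceeds p, contradiction
  have hmemL : (∑ i ∈ Finset.Iic L, ins i) / (∑ i ∈ Finset.range (L.val + 1), D i) ∈
      {x : ℝ | ∃ ℓ : Fin (m + 1),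
        x = (∑ i ∈ Finset.Iic ℓ, ins i) / (∑ i ∈ Finset.range (ℓ.val + 1), D i)} := ⟨L, rfl⟩
  have hle := hsameprice.2 hmemL
  have hLval : L.val = lstar.val := rfl
  rw [hLval] at hle
  have hgt : p < (∑ i ∈ Finset.Iic L, ins i) / (∑ i ∈ Finset.range (lstar.val + 1), D i) := by
    rw [← hlstar]
    gcongr
  linarith
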